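/- arXiv:2603.21179 — 2 statements merged into one kernel-verified Lean document; each statement's English description precedes it below -/
import Mathlib

section
/- Let f, g ∈ ℂ[z] be polynomials of degree d ≥ 2. If f and g are intertwined, or f and ḡ are intertwined, then 𝓛_f = 𝓛_g. -/
open Polynomial

noncomputable section

/-- The `n`-th iterate `f^{∘n}` of a polynomial under composition, with `f^{∘0} = X`. -/
def iterComp {R : Type*} [CommSemiring R] (f : Polynomial R) : ℕ → Polynomial R
  | 0 => Polynomial.X
  | n + 1 => f.comp (iterComp f n)

/-- Two polynomials `f` and `g` are intertwined if there are an integer `n ≥ 1` and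
nonconstant polynomials `S, h₁, h₂` with `f^{∘n} ∘ h₁ = h₁ ∘ S` and `g^{∘n} ∘ h₂ = h₂ ∘ S`. -/
def Intertwined {R : Type*} [CommSemiring R] (f g : Polynomial R) : Prop :=
  ∃ (n : ℕ) (S h₁ h₂ : Polynomial R),
    0 < n ∧ 0 < S.natDegree ∧ 0 < h₁.natDegree ∧ 0 < h₂.natDegree ∧
    (iterComp f n).comp h₁ = h₁.comp S ∧ (iterComp g n).comp h₂ = h₂.comp S

/-- The forward orbit of `z` under a complex polynomial `f` is bounded;
equivalently, `z` lies in the filled Julia set `K(f)`. -/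
def BoundedOrbit (f : Polynomial ℂ) (z : ℂ) : Prop :=
  ∃ M : ℝ, ∀ n : ℕ, ‖(fun w => f.eval w)^[n] z‖ ≤ M

/-- The Green function (escape-rate function) of a polynomial `f` of degree `d ≥ 2`:
`g_f(z) = lim_{n→∞} d^{-n} log⁺ |f^{∘n}(z)|`. -/
def greenFn (f : Polynomial ℂ) (z : ℂ) : ℝ :=
  Filter.limUnder Filter.atTop fun n : ℕ =>
    ((f.natDegree : ℝ) ^ n)⁻¹ * Real.log (max 1 (‖(fun w => f.eval w)^[n] z‖))

/-- The Lyapunov exponent of `f` given by Przytycki's formula: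
`𝓛_f = log d + Σ_c g_f(c)`, summing over the roots of `f'` with multiplicity. -/
def lyap (f : Polynomial ℂ) : ℝ :=
  Real.log (f.natDegree : ℝ) + (f.derivative.roots.map (greenFn f)).sum

/-- The polynomial obtained by applying complex conjugation to every coefficient of `f`. -/
def conjPoly (f : Polynomial ℂ) : Polynomial ℂ := f.map (starRingEnd ℂ)

/-- `f` and `g` are affinely conjugate: `f ∘ L = L ∘ g` for an affine map `L(z) = az + b`, `a ≠ 0`. -/
def AffineConj {K : Type*} [Field K] (f g : Polynomial K) : Prop :=
  ∃ a b : K, a ≠ 0 ∧ f.comp (C a * X + C b) = (C a * X + C b).comp g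

/-- `T` is the normalized degree-`d` Chebyshev polynomial: the monic polynomial of degree `d`
satisfying `T(z + z⁻¹) = z^d + z^{-d}`. -/
def IsNormalizedChebyshev {K : Type*} [Field K] (d : ℕ) (T : Polynomial K) : Prop :=
  T.Monic ∧ T.natDegree = d ∧ ∀ z : K, z ≠ 0 → T.eval (z + z⁻¹) = z ^ d + (z⁻¹) ^ d

/-- A polynomial of degree `d` is exceptional if it is affinely conjugate to `z^d` or to `±T_d`. -/
def Exceptional {K : Type*} [Field K] (d : ℕ) (f : Polynomial K) : Prop :=
  AffineConj f (X ^ d) ∨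
    ∃ T : Polynomial K, IsNormalizedChebyshev d T ∧ (AffineConj f T ∨ AffineConj f (-T))

/-- A fixed algebraic closure `ℚ̄` of `ℚ`. -/
abbrev Qbar := AlgebraicClosure ℚ

/-- The least common multiple of the denominators of the coefficients of a rational polynomial. -/
def denomLcm (p : Polynomial ℚ) : ℕ :=
  (Finset.range (p.natDegree + 1)).lcm fun i => (p.coeff i).den

/-- The absolute logarithmic Weil height of an algebraic number `x ∈ ℚ̄`, via the Mahler-measure
formula: `h(x) = (1/n) log (D ∏ᵢ max(1,|xᵢ|))` where `n` is the degree of the minimal polynomial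
of `x` over `ℚ`, `D` is the lcm of the denominators of its coefficients (so that `D·minpoly` is
the primitive integer minimal polynomial), and the `xᵢ` are the complex conjugates of `x`. -/
def weilHeight (x : Qbar) : ℝ :=
  ((minpoly ℚ x).natDegree : ℝ)⁻¹ *
    Real.log ((denomLcm (minpoly ℚ x) : ℝ) *
      (((minpoly ℚ x).map (algebraMap ℚ ℂ)).roots.map fun α => max 1 (‖α‖)).prod)

/-- The canonical height `ĥ_f(a) = lim_{n→∞} d^{-n} h(f^{∘n}(a))` of `a ∈ ℚ̄` for a polynomial
`f ∈ ℚ̄[z]` of degree `d ≥ 2`. -/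
def canHeight (f : Polynomial Qbar) (a : Qbar) : ℝ :=
  Filter.limUnder Filter.atTop fun n : ℕ =>
    ((f.natDegree : ℝ) ^ n)⁻¹ * weilHeight ((fun w => f.eval w)^[n] a)

/-- The critical height `ĥ_crit(f) = Σ_c ĥ_f(c)`, summing over the roots of `f'` in `ℚ̄`
counted with multiplicity. -/
def critHeight (f : Polynomial Qbar) : ℝ :=
  (f.derivative.roots.map (canHeight f)).sum

end

open Filter

noncomputable section GreenProof

/-- `log⁺` of the absolute value. -/
def logPlus (w : ℂ) : ℝ := Real.log (max 1 (‖w‖))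

lemma logPlus_def (w : ℂ) : logPlus w = Real.log (max 1 (‖w‖)) := rfl

lemma logPlus_nonneg (w : ℂ) : 0 ≤ logPlus w := Real.log_nonneg (le_max_left _ _)

lemma abs_eval_le (p : Polynomial ℂ) (w : ℂ) :
    ‖p.eval w‖ ≤
      (∑ i ∈ Finset.range (p.natDegree + 1), ‖p.coeff i‖) *
        max 1 (‖w‖) ^ p.natDegree := by
  rw [Polynomial.eval_eq_sum_range, Finset.sum_mul]
  refine le_trans (norm_sum_le _ _) (Finset.sum_le_sum fun i hi => ?_)
  rw [norm_mul, norm_pow]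
  refine mul_le_mul_of_nonneg_left ?_ (norm_nonneg _)
  calc ‖w‖ ^ i ≤ max 1 (‖w‖) ^ i := by
        exact pow_le_pow_left₀ (norm_nonneg _) (le_max_right _ _) i
    _ ≤ max 1 (‖w‖) ^ p.natDegree := by
        refine pow_le_pow_right₀ (le_max_left _ _) ?_
        exact Nat.lt_succ_iff.mp (Finset.mem_range.mp hi)

lemma abs_eval_sub_le (p : Polynomial ℂ) (hp : 0 < p.natDegree) (w : ℂ) :
    ‖p.eval w - p.leadingCoeff * w ^ p.natDegree‖ ≤
      (∑ i ∈ Finset.range p.natDegree, ‖p.coeff i‖) *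
        max 1 (‖w‖) ^ (p.natDegree - 1) := by
  have h1 : p.eval w - p.leadingCoeff * w ^ p.natDegree
      = ∑ i ∈ Finset.range p.natDegree, p.coeff i * w ^ i := by
    rw [Polynomial.eval_eq_sum_range, Finset.sum_range_succ, Polynomial.coeff_natDegree]
    ring
  rw [h1, Finset.sum_mul]
  refine le_trans (norm_sum_le _ _) (Finset.sum_le_sum fun i hi => ?_)
  rw [norm_mul, norm_pow]
  refine mul_le_mul_of_nonneg_left ?_ (norm_nonneg _)
  calc ‖w‖ ^ i ≤ max 1 (‖w‖) ^ i :=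
        pow_le_pow_left₀ (norm_nonneg _) (le_max_right _ _) i
    _ ≤ max 1 (‖w‖) ^ (p.natDegree - 1) := by
        refine pow_le_pow_right₀ (le_max_left _ _) ?_
        have := Finset.mem_range.mp hi
        omega

lemma log_comp_bound (p : Polynomial ℂ) (hp : 0 < p.natDegree) :
    ∃ C : ℝ, 0 ≤ C ∧ ∀ w : ℂ,
      |logPlus (p.eval w) - (p.natDegree : ℝ) * logPlus w| ≤ C := by
  set m := p.natDegree with hm
  have hp0 : p ≠ 0 := fun h => by simp [h] at hm; omega
  set a := ‖p.leadingCoeff‖ with ha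
  have ha0 : 0 < a := norm_pos_iff.mpr (leadingCoeff_ne_zero.mpr hp0)
  set Cq := ∑ i ∈ Finset.range m, ‖p.coeff i‖ with hCq
  have hCq0 : 0 ≤ Cq := Finset.sum_nonneg fun i _ => norm_nonneg _
  set Cp := Cq + a with hCp
  have hCp0 : 0 < Cp := by rw [hCp]; linarith
  have hub : ∀ w : ℂ, ‖p.eval w‖ ≤ Cp * max 1 (‖w‖) ^ m := by
    intro w
    have h := abs_eval_le p w
    rwa [Finset.sum_range_succ, Polynomial.coeff_natDegree, ← hm, ← ha, ← hCq, ← hCp] at h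
  set R := max 2 ((2 * Cq + 2) / a) with hR
  have hR1 : (1 : ℝ) ≤ R := le_trans one_le_two (le_max_left _ _)
  have hRq : 2 * Cq + 2 ≤ R * a := by
    have : (2 * Cq + 2) / a ≤ R := le_max_right _ _
    calc 2 * Cq + 2 = ((2 * Cq + 2) / a) * a := by field_simp
      _ ≤ R * a := by gcongr
  set B1 := Real.log (max 1 (Cp * R ^ m)) with hB1
  have hB10 : 0 ≤ B1 := Real.log_nonneg (le_max_left _ _)
  have hlogR : 0 ≤ Real.log R := Real.log_nonneg hR1
  refine ⟨|Real.log (a / 2)| + |Real.log Cp| + (B1 + m * Real.log R),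
    by positivity, fun w => ?_⟩
  rcases le_or_gt R (‖w‖) with hw | hw
  · -- escape region
    set x := ‖w‖ with hx
    have hx1 : (1 : ℝ) ≤ x := le_trans hR1 hw
    have hmax : max 1 x = x := max_eq_right hx1
    have hxm1 : (0:ℝ) ≤ x ^ (m - 1) := by positivity
    have hxm : x ^ m = x ^ (m - 1) * x := by
      rw [← pow_succ]; congr 1; omega
    have hlow : a * x ^ m - Cq * x ^ (m - 1) ≤ ‖p.eval w‖ := by
      have h1 := abs_eval_sub_le p hp w
      rw [hmax, ← hCq, ← hm] at h1
      have h2 : a * x ^ m = ‖p.leadingCoeff * w ^ m‖ := by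
        rw [norm_mul, norm_pow, ← ha, ← hx]
      have h3 : ‖p.leadingCoeff * w ^ m‖ ≤
          ‖p.eval w‖ + ‖p.eval w - p.leadingCoeff * w ^ m‖ := by
        calc ‖p.leadingCoeff * w ^ m‖
            = ‖p.eval w + (p.leadingCoeff * w ^ m - p.eval w)‖ := by
              congr 1; ring
          _ ≤ ‖p.eval w‖ + ‖p.leadingCoeff * w ^ m - p.eval w‖ :=
              norm_add_le _ _
          _ = ‖p.eval w‖ + ‖p.eval w - p.leadingCoeff * w ^ m‖ := by
              rw [norm_sub_rev]
      linarith
    have hmid : (a / 2) * x ^ m ≤ a * x ^ m - Cq * x ^ (m - 1) := by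
      rw [hxm]
      have hax : 2 * Cq + 2 ≤ x * a := le_trans hRq (by nlinarith)
      nlinarith [mul_nonneg hxm1 (by nlinarith : 0 ≤ (a / 2) * x - Cq)]
    have h1le : (1 : ℝ) ≤ (a / 2) * x ^ m := by
      have hxx : x ≤ x ^ m := le_self_pow₀ hx1 (by omega)
      have hax : 2 * Cq + 2 ≤ x * a := le_trans hRq (by nlinarith)
      nlinarith
    have habs1 : (1:ℝ) ≤ ‖p.eval w‖ := by linarith
    have heq : logPlus (p.eval w) = Real.log (‖p.eval w‖) := by
      rw [logPlus_def, max_eq_right habs1]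
    have hlogup : Real.log (‖p.eval w‖) ≤ Real.log Cp + m * Real.log x := by
      have h5 := hub w
      rw [hmax] at h5
      have hxm0 : (0:ℝ) < x ^ m := pow_pos (by linarith) m
      calc Real.log (‖p.eval w‖) ≤ Real.log (Cp * x ^ m) :=
            Real.log_le_log (by linarith) h5
        _ = Real.log Cp + m * Real.log x := by
            rw [Real.log_mul (ne_of_gt hCp0) hxm0.ne', Real.log_pow]
    have hlogdown : Real.log (a / 2) + m * Real.log x ≤
        Real.log (‖p.eval w‖) := by
      have ha2 : (0:ℝ) < a / 2 := by linarith
      have hxm0 : (0:ℝ) < x ^ m := pow_pos (by linarith) m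
      calc Real.log (a / 2) + (m : ℝ) * Real.log x = Real.log ((a / 2) * x ^ m) := by
            rw [Real.log_mul ha2.ne' hxm0.ne', Real.log_pow]
        _ ≤ _ := Real.log_le_log (mul_pos ha2 hxm0) (by linarith)
    have hlpw : logPlus w = Real.log x := by rw [logPlus_def, ← hx, hmax]
    rw [heq, hlpw]
    have l1 := neg_abs_le (Real.log (a / 2))
    have l2 := le_abs_self (Real.log Cp)
    have l3 : (0:ℝ) ≤ (m:ℝ) * Real.log R := mul_nonneg (Nat.cast_nonneg _) hlogR
    have l4 := abs_nonneg (Real.log (a/2))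
    have l5 := abs_nonneg (Real.log Cp)
    rw [abs_le]
    constructor <;> linarith
  · -- bounded region
    have hup : logPlus (p.eval w) ≤ B1 := by
      rw [logPlus_def, hB1]
      refine Real.log_le_log (lt_of_lt_of_le one_pos (le_max_left _ _)) ?_
      apply max_le_max le_rfl
      calc ‖p.eval w‖ ≤ Cp * max 1 (‖w‖) ^ m := hub w
        _ ≤ Cp * R ^ m := by
            refine mul_le_mul_of_nonneg_left ?_ hCp0.le
            exact pow_le_pow_left₀ (le_trans zero_le_one (le_max_left _ _))
              (max_le hR1 hw.le) m
    have hup2 : (m : ℝ) * logPlus w ≤ m * Real.log R := by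
      have : logPlus w ≤ Real.log R := by
        rw [logPlus_def]
        exact Real.log_le_log (lt_of_lt_of_le one_pos (le_max_left _ _)) (max_le hR1 hw.le)
      exact mul_le_mul_of_nonneg_left this (Nat.cast_nonneg _)
    have h1 := logPlus_nonneg (p.eval w)
    have h2 : 0 ≤ (m : ℝ) * logPlus w := mul_nonneg (Nat.cast_nonneg _) (logPlus_nonneg w)
    have l3 : (0:ℝ) ≤ (m:ℝ) * Real.log R := mul_nonneg (Nat.cast_nonneg _) hlogR
    have l4 := abs_nonneg (Real.log (a/2))
    have l5 := abs_nonneg (Real.log Cp)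
    rw [abs_le]
    constructor <;> linarith
/-- The sequence defining the Green function. -/
def gseq (p : Polynomial ℂ) (z : ℂ) (n : ℕ) : ℝ :=
  ((p.natDegree : ℝ) ^ n)⁻¹ * logPlus ((fun w => p.eval w)^[n] z)

lemma greenFn_eq_limUnder (p : Polynomial ℂ) (z : ℂ) :
    greenFn p z = limUnder Filter.atTop (gseq p z) := rfl

lemma green_tendsto (p : Polynomial ℂ) (hp : 2 ≤ p.natDegree) (z : ℂ) :
    Tendsto (gseq p z) atTop (nhds (greenFn p z)) := by
  obtain ⟨C, hC0, hC⟩ := log_comp_bound p (by omega)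
  set d := p.natDegree with hd
  have hd1 : (1:ℝ) < (d:ℝ) := by exact_mod_cast (by omega : 1 < d)
  have hd0 : (0:ℝ) < (d:ℝ) := by linarith
  have key : ∀ n : ℕ, dist (gseq p z n) (gseq p z (n+1)) ≤ (C / d) * ((d:ℝ)⁻¹) ^ n := by
    intro n
    have h1 : (fun w => p.eval w)^[n+1] z = p.eval ((fun w => p.eval w)^[n] z) :=
      Function.iterate_succ_apply' _ _ _
    set w := (fun w => p.eval w)^[n] z with hw
    have hdn : ((d:ℝ)^n) ≠ 0 := by positivity
    have e : gseq p z n - gseq p z (n+1)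
        = ((d:ℝ)^(n+1))⁻¹ * ((d:ℝ) * logPlus w - logPlus (p.eval w)) := by
      rw [gseq, gseq, h1, ← hw, ← hd]
      field_simp
      ring
    rw [Real.dist_eq, e, abs_mul]
    have habs : |((d:ℝ)^(n+1))⁻¹| = ((d:ℝ)^(n+1))⁻¹ := abs_of_pos (by positivity)
    rw [habs]
    have h2 : |(d:ℝ) * logPlus w - logPlus (p.eval w)| ≤ C := by
      rw [abs_sub_comm]; exact hC w
    calc ((d:ℝ)^(n+1))⁻¹ * |(d:ℝ) * logPlus w - logPlus (p.eval w)|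
        ≤ ((d:ℝ)^(n+1))⁻¹ * C := by
          exact mul_le_mul_of_nonneg_left h2 (by positivity)
      _ = (C / d) * ((d:ℝ)⁻¹)^n := by
          rw [pow_succ, mul_inv, inv_pow, div_eq_mul_inv]
          ring
  have hcauchy : CauchySeq (gseq p z) :=
    cauchySeq_of_le_geometric _ _ (by
      rw [inv_lt_one_iff₀]; right; exact hd1) key
  obtain ⟨G, hG⟩ := cauchySeq_tendsto_of_complete hcauchy
  rw [greenFn_eq_limUnder, hG.limUnder_eq]
  exact hG

lemma green_eval (p : Polynomial ℂ) (hp : 2 ≤ p.natDegree) (z : ℂ) :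
    greenFn p (p.eval z) = (p.natDegree : ℝ) * greenFn p z := by
  have h1 := green_tendsto p hp z
  have h2 := green_tendsto p hp (p.eval z)
  have h3 : Tendsto (fun n => gseq p z (n + 1)) atTop (nhds (greenFn p z)) :=
    h1.comp (tendsto_add_atTop_nat 1)
  have h4 : ∀ n : ℕ, gseq p (p.eval z) n = (p.natDegree : ℝ) * gseq p z (n + 1) := by
    intro n
    have hd0 : ((p.natDegree : ℝ)) ≠ 0 := by
      have : (0:ℝ) < p.natDegree := by exact_mod_cast (by omega : 0 < p.natDegree)
      linarith
    have hdn : ((p.natDegree : ℝ) ^ n) ≠ 0 := pow_ne_zero _ hd0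
    have e : (fun w => p.eval w)^[n] (p.eval z) = (fun w => p.eval w)^[n + 1] z :=
      (Function.iterate_succ_apply (fun w => p.eval w) n z).symm
    rw [gseq, gseq, e, pow_succ, mul_inv]
    field_simp
  have h5 : Tendsto (gseq p (p.eval z)) atTop
      (nhds ((p.natDegree : ℝ) * greenFn p z)) := by
    have := h3.const_mul ((p.natDegree : ℝ))
    simpa [← h4] using this
  exact tendsto_nhds_unique h2 h5

lemma green_iterate (p : Polynomial ℂ) (hp : 2 ≤ p.natDegree) (k : ℕ) (z : ℂ) :
    greenFn p ((fun w => p.eval w)^[k] z) = (p.natDegree : ℝ) ^ k * greenFn p z := by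
  induction k with
  | zero => simp
  | succ m ih =>
    rw [Function.iterate_succ_apply', green_eval p hp, ih, pow_succ]
    ring

lemma iterComp_natDegree (f : Polynomial ℂ) (n : ℕ) :
    (iterComp f n).natDegree = f.natDegree ^ n := by
  induction n with
  | zero => simp [iterComp]
  | succ m ih => rw [iterComp, natDegree_comp, ih, pow_succ]; ring

lemma iterComp_eval (f : Polynomial ℂ) (n : ℕ) (z : ℂ) :
    (iterComp f n).eval z = (fun w => f.eval w)^[n] z := by
  induction n with
  | zero => simp [iterComp]
  | succ m ih =>
    rw [iterComp, eval_comp, ih, Function.iterate_succ_apply']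

lemma iterComp_iterate_eval (f : Polynomial ℂ) (n k : ℕ) (z : ℂ) :
    (fun w => (iterComp f n).eval w)^[k] z = (fun w => f.eval w)^[n * k] z := by
  induction k with
  | zero => simp
  | succ m ih =>
    rw [Function.iterate_succ_apply', ih, iterComp_eval,
      ← Function.iterate_add_apply]
    congr 1
    ring

lemma green_iterComp (f : Polynomial ℂ) (hf : 2 ≤ f.natDegree) (n : ℕ) (hn : 0 < n) (z : ℂ) :
    greenFn (iterComp f n) z = greenFn f z := by
  have hd : (iterComp f n).natDegree = f.natDegree ^ n := iterComp_natDegree f n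
  have h2 : 2 ≤ (iterComp f n).natDegree := by
    rw [hd]
    calc 2 ≤ f.natDegree := hf
      _ ≤ f.natDegree ^ n := Nat.le_self_pow hn.ne' _
  have hF := green_tendsto (iterComp f n) h2 z
  have hf' := green_tendsto f hf z
  have hsub : Tendsto (fun k => gseq f z (n * k)) atTop (nhds (greenFn f z)) := by
    refine hf'.comp ?_
    exact tendsto_atTop_atTop_of_monotone
      (fun a b hab => Nat.mul_le_mul_left n hab)
      (fun b => ⟨b, Nat.le_mul_of_pos_left b hn⟩)
  have heq : ∀ k : ℕ, gseq (iterComp f n) z k = gseq f z (n * k) := by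
    intro k
    rw [gseq, gseq, iterComp_iterate_eval, hd]
    congr 1
    rw [pow_mul]
    push_cast
    rfl
  rw [show gseq (iterComp f n) z = fun k => gseq f z (n * k) from funext heq] at hF
  exact tendsto_nhds_unique hF hsub

lemma semiconj_iterate_eval (F h S : Polynomial ℂ)
    (hsemi : F.comp h = h.comp S) (k : ℕ) (z : ℂ) :
    (fun w => F.eval w)^[k] (h.eval z) = h.eval ((fun w => S.eval w)^[k] z) := by
  induction k generalizing z with
  | zero => simp
  | succ m ih =>
    have h1 : F.eval (h.eval z) = h.eval (S.eval z) := by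
      have := congrArg (Polynomial.eval z) hsemi
      rwa [eval_comp, eval_comp] at this
    rw [Function.iterate_succ_apply, Function.iterate_succ_apply]
    calc (fun w => F.eval w)^[m] (F.eval (h.eval z))
        = (fun w => F.eval w)^[m] (h.eval (S.eval z)) := by rw [h1]
      _ = h.eval ((fun w => S.eval w)^[m] (S.eval z)) := ih (S.eval z)

lemma green_semiconj (F h S : Polynomial ℂ) (hF2 : 2 ≤ F.natDegree)
    (hh : 0 < h.natDegree) (hS : S.natDegree = F.natDegree)
    (hsemi : F.comp h = h.comp S) (z : ℂ) :
    greenFn F (h.eval z) = (h.natDegree : ℝ) * greenFn S z := by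
  have hS2 : 2 ≤ S.natDegree := by omega
  obtain ⟨C, hC0, hC⟩ := log_comp_bound h hh
  have hFt := green_tendsto F hF2 (h.eval z)
  have hSt := green_tendsto S hS2 z
  set D := F.natDegree with hD
  have hD1 : (1:ℝ) < (D:ℝ) := by exact_mod_cast (by omega : 1 < D)
  have hdist : ∀ k : ℕ,
      dist (gseq F (h.eval z) k) ((h.natDegree : ℝ) * gseq S z k) ≤ C * ((D:ℝ)⁻¹) ^ k := by
    intro k
    have e1 : (fun w => F.eval w)^[k] (h.eval z) = h.eval ((fun w => S.eval w)^[k] z) :=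
      semiconj_iterate_eval F h S hsemi k z
    set y := (fun w => S.eval w)^[k] z with hy
    have e2 : gseq F (h.eval z) k - (h.natDegree : ℝ) * gseq S z k
        = ((D:ℝ)^k)⁻¹ * (logPlus (h.eval y) - (h.natDegree : ℝ) * logPlus y) := by
      rw [gseq, gseq, e1, ← hy, ← hD, hS]
      ring
    rw [Real.dist_eq, e2, abs_mul, abs_of_pos (a := ((D:ℝ)^k)⁻¹) (by positivity),
      inv_pow, mul_comm]
    exact mul_le_mul_of_nonneg_right (hC y) (by positivity)
  have hzero : Tendsto (fun k => dist (gseq F (h.eval z) k)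
      ((h.natDegree : ℝ) * gseq S z k)) atTop (nhds 0) := by
    refine squeeze_zero (fun k => dist_nonneg) hdist ?_
    have : Tendsto (fun k : ℕ => ((D:ℝ)⁻¹) ^ k) atTop (nhds 0) := by
      refine tendsto_pow_atTop_nhds_zero_of_lt_one (by positivity) ?_
      rw [inv_lt_one_iff₀]; right; exact hD1
    simpa using this.const_mul C
  have hmul : Tendsto (fun k => (h.natDegree : ℝ) * gseq S z k) atTop
      (nhds ((h.natDegree : ℝ) * greenFn S z)) := hSt.const_mul _
  have := hmul.congr_dist (by simpa [dist_comm] using hzero)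
  exact tendsto_nhds_unique hFt this

lemma card_roots_complex (p : Polynomial ℂ) :
    Multiset.card p.roots = p.natDegree :=
  (splits_iff_card_roots.mp (IsAlgClosed.splits p))

lemma comp_ne_zero' (p q : Polynomial ℂ) (hp : p ≠ 0) (hq : 0 < q.natDegree) :
    p.comp q ≠ 0 := by
  intro h0
  have hl := leadingCoeff_comp (p := p) (q := q) hq.ne'
  rw [h0, leadingCoeff_zero] at hl
  have hq0 : q.leadingCoeff ≠ 0 := leadingCoeff_ne_zero.mpr (fun h => by simp [h] at hq)
  have hp0 : p.leadingCoeff ≠ 0 := leadingCoeff_ne_zero.mpr hp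
  rcases mul_eq_zero.mp hl.symm with h | h
  · exact hp0 h
  · exact hq0 (pow_eq_zero_iff'.mp h).1

/-- Master lemma: summing `φ` over the roots of `P ∘ q` equals summing `ψ` over roots of `P`,
when `φ z = ψ (q z) / deg q`. -/
lemma sum_roots_comp (P q : Polynomial ℂ) (hP : P ≠ 0) (hq : 0 < q.natDegree)
    (φ ψ : ℂ → ℝ) (h : ∀ z : ℂ, φ z = ψ (q.eval z) / (q.natDegree : ℝ)) :
    (((P.comp q).roots).map φ).sum = (P.roots.map ψ).sum := by
  have hfac : C P.leadingCoeff * (P.roots.map fun a => X - C a).prod = P :=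
    C_leadingCoeff_mul_prod_multiset_X_sub_C (card_roots_complex P)
  have hcomp : P.comp q = C P.leadingCoeff * (P.roots.map fun a => q - C a).prod := by
    conv_lhs => rw [← hfac]
    rw [mul_comp, C_comp, multiset_prod_comp, Multiset.map_map]
    congr 2
    refine Multiset.map_congr rfl fun a _ => ?_
    simp [sub_comp]
  have hqa0 : ∀ a : ℂ, q - C a ≠ 0 := by
    intro a h0
    have : q = C a := by linear_combination (norm := ring_nf) h0
    rw [this, natDegree_C] at hq
    omega
  have h0 : (0 : Polynomial ℂ) ∉ P.roots.map fun a => q - C a := by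
    intro hmem
    obtain ⟨a, _, ha⟩ := Multiset.mem_map.mp hmem
    exact hqa0 a ha
  rw [hcomp, roots_C_mul _ (leadingCoeff_ne_zero.mpr hP),
    roots_multiset_prod _ h0, Multiset.bind_map, Multiset.map_bind, Multiset.sum_bind]
  have inner : ∀ a : ℂ, (((q - C a).roots).map φ).sum = ψ a := by
    intro a
    have hcard : Multiset.card (q - C a).roots = q.natDegree := by
      rw [card_roots_complex, natDegree_sub_C]
    have hval : ∀ z ∈ (q - C a).roots, φ z = ψ a / (q.natDegree : ℝ) := by
      intro z hz
      have hz' : q.eval z = a := by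
        have := (mem_roots (hqa0 a)).mp hz
        rw [IsRoot, eval_sub, eval_C, sub_eq_zero] at this
        exact this
      rw [h z, hz']
    rw [Multiset.map_congr rfl hval, Multiset.map_const', Multiset.sum_replicate, hcard,
      nsmul_eq_mul]
    have : ((q.natDegree : ℝ)) ≠ 0 := by
      exact_mod_cast (by omega : q.natDegree ≠ 0)
    field_simp
  rw [Multiset.map_congr rfl fun a _ => inner a]

lemma derivative_ne_zero' (p : Polynomial ℂ) (hp : 0 < p.natDegree) : p.derivative ≠ 0 :=
  fun h => by have := natDegree_eq_zero_of_derivative_eq_zero h; omega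

lemma sum_green_deriv_iterComp (f : Polynomial ℂ) (hf : 2 ≤ f.natDegree) (n : ℕ) :
    (((iterComp f n).derivative.roots).map (greenFn f)).sum
      = (n : ℝ) * ((f.derivative.roots).map (greenFn f)).sum := by
  induction n with
  | zero => simp [iterComp]
  | succ k ih =>
    have hfd0 : f.derivative ≠ 0 := derivative_ne_zero' f (by omega)
    have hFk : (iterComp f k).natDegree = f.natDegree ^ k := iterComp_natDegree f k
    have hFkpos : 0 < (iterComp f k).natDegree := by
      rw [hFk]; exact pow_pos (by omega) k
    have hFkd : (iterComp f k).derivative ≠ 0 := derivative_ne_zero' _ hFkpos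
    have hcomp0 : f.derivative.comp (iterComp f k) ≠ 0 := comp_ne_zero' _ _ hfd0 hFkpos
    show (((f.comp (iterComp f k)).derivative.roots).map (greenFn f)).sum = _
    rw [derivative_comp, roots_mul (mul_ne_zero hFkd hcomp0), Multiset.map_add,
      Multiset.sum_add]
    have h1 : ((f.derivative.comp (iterComp f k)).roots.map (greenFn f)).sum
        = (f.derivative.roots.map (greenFn f)).sum := by
      refine sum_roots_comp _ _ hfd0 hFkpos _ _ fun z => ?_
      rw [iterComp_eval, green_iterate f hf k z, hFk]
      have hne : ((f.natDegree : ℝ)) ≠ 0 := by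
        exact_mod_cast (by omega : f.natDegree ≠ 0)
      push_cast
      field_simp
    rw [h1, ih]
    push_cast
    ring

lemma sum_green_eq_of_semiconj (f S h : Polynomial ℂ) (n : ℕ) (hn : 0 < n)
    (hf : 2 ≤ f.natDegree) (hh : 0 < h.natDegree) (hS : 0 < S.natDegree)
    (hsemi : (iterComp f n).comp h = h.comp S) :
    (n : ℝ) * ((f.derivative.roots).map (greenFn f)).sum
      = ((S.derivative.roots).map (greenFn S)).sum := by
  set F := iterComp f n with hF
  have hFdeg : F.natDegree = f.natDegree ^ n := iterComp_natDegree f n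
  have hF2 : 2 ≤ F.natDegree := by
    rw [hFdeg]
    calc 2 ≤ f.natDegree := hf
      _ ≤ _ := Nat.le_self_pow hn.ne' _
  have hSdeg : S.natDegree = F.natDegree := by
    have hnd := congrArg natDegree hsemi
    rw [natDegree_comp, natDegree_comp] at hnd
    have h2 : h.natDegree * S.natDegree = h.natDegree * F.natDegree := by
      rw [← hnd, Nat.mul_comm]
    exact Nat.eq_of_mul_eq_mul_left hh h2
  have hS2 : 2 ≤ S.natDegree := by omega
  have hder : h.derivative * (F.derivative.comp h)
      = S.derivative * (h.derivative.comp S) := by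
    have hder0 := congrArg Polynomial.derivative hsemi
    rwa [derivative_comp, derivative_comp] at hder0
  have hhd : h.derivative ≠ 0 := derivative_ne_zero' h hh
  have hFd : F.derivative ≠ 0 := derivative_ne_zero' F (by omega)
  have hSd : S.derivative ≠ 0 := derivative_ne_zero' S (by omega)
  have hc1 : F.derivative.comp h ≠ 0 := comp_ne_zero' _ _ hFd hh
  have hc2 : h.derivative.comp S ≠ 0 := comp_ne_zero' _ _ hhd hS
  have e := congrArg (fun p : Polynomial ℂ => ((p.roots).map (greenFn S)).sum) hder
  simp only [roots_mul (mul_ne_zero hhd hc1), roots_mul (mul_ne_zero hSd hc2),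
    Multiset.map_add, Multiset.sum_add] at e
  have p1 : ((F.derivative.comp h).roots.map (greenFn S)).sum
      = (F.derivative.roots.map (greenFn f)).sum := by
    refine sum_roots_comp _ _ hFd hh _ _ fun z => ?_
    have h7 : greenFn F (h.eval z) = (h.natDegree : ℝ) * greenFn S z :=
      green_semiconj F h S hF2 hh hSdeg hsemi z
    have h6 : greenFn F (h.eval z) = greenFn f (h.eval z) := green_iterComp f hf n hn _
    rw [← h6, h7]
    have hne : ((h.natDegree : ℝ)) ≠ 0 := by exact_mod_cast hh.ne'
    field_simp
  have p2 : ((h.derivative.comp S).roots.map (greenFn S)).sum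
      = (h.derivative.roots.map (greenFn S)).sum := by
    refine sum_roots_comp _ _ hhd hS _ _ fun z => ?_
    rw [green_eval S hS2 z]
    have hne : ((S.natDegree : ℝ)) ≠ 0 := by exact_mod_cast hS.ne'
    field_simp
  have p3 : (F.derivative.roots.map (greenFn f)).sum
      = (n : ℝ) * ((f.derivative.roots).map (greenFn f)).sum :=
    sum_green_deriv_iterComp f hf n
  rw [p1, p2, p3] at e
  linarith [e]

lemma conjPoly_natDegree (g : Polynomial ℂ) : (conjPoly g).natDegree = g.natDegree :=
  natDegree_map_eq_of_injective (starRingEnd ℂ).injective g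

lemma greenFn_conj (g : Polynomial ℂ) (z : ℂ) :
    greenFn (conjPoly g) ((starRingEnd ℂ) z) = greenFn g z := by
  have hit : ∀ k : ℕ, (fun w => (conjPoly g).eval w)^[k] ((starRingEnd ℂ) z)
      = (starRingEnd ℂ) ((fun w => g.eval w)^[k] z) := by
    intro k
    induction k with
    | zero => simp
    | succ m ih =>
      rw [Function.iterate_succ_apply', Function.iterate_succ_apply', ih]
      show (g.map (starRingEnd ℂ)).eval _ = _
      rw [eval_map, eval₂_hom]
  simp only [greenFn]
  congr 1
  funext k
  rw [hit k, conjPoly_natDegree, Complex.norm_conj]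

lemma lyap_conjPoly (g : Polynomial ℂ) : lyap (conjPoly g) = lyap g := by
  have hder : (conjPoly g).derivative = g.derivative.map (starRingEnd ℂ) :=
    derivative_map g (starRingEnd ℂ)
  have hroots : (g.derivative.map (starRingEnd ℂ)).roots
      = g.derivative.roots.map (starRingEnd ℂ) :=
    Splits.roots_map (IsAlgClosed.splits _) _
  rw [lyap, lyap, conjPoly_natDegree, hder, hroots, Multiset.map_map]
  congr 1
  refine congrArg _ (Multiset.map_congr rfl fun c _ => ?_)
  exact greenFn_conj g c

end GreenProof

/-- For `f, g ∈ ℂ[z]` of degree `d ≥ 2`, if `f` and `g` are intertwined, or `f`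
and `ḡ` are intertwined, then `𝓛_f = 𝓛_g`. -/
theorem lyap_eq_of_intertwined (d : ℕ) (hd : 2 ≤ d) (f g : Polynomial ℂ)
    (hfd : f.natDegree = d) (hgd : g.natDegree = d)
    (h : Intertwined f g ∨ Intertwined f (conjPoly g)) :
    lyap f = lyap g := by
  have key : ∀ g' : Polynomial ℂ, g'.natDegree = d → Intertwined f g' →
      lyap f = lyap g' := by
    intro g' hg'd hint
    obtain ⟨n, S, h₁, h₂, hn, hSd, hh1, hh2, e1, e2⟩ := hint
    have s1 := sum_green_eq_of_semiconj f S h₁ n hn (by rw [hfd]; exact hd) hh1 hSd e1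
    have s2 := sum_green_eq_of_semiconj g' S h₂ n hn (by rw [hg'd]; exact hd) hh2 hSd e2
    have hn0 : ((n : ℝ)) ≠ 0 := by exact_mod_cast hn.ne'
    have hsum : ((f.derivative.roots).map (greenFn f)).sum
        = ((g'.derivative.roots).map (greenFn g')).sum :=
      mul_left_cancel₀ hn0 (s1.trans s2.symm)
    rw [lyap, lyap, hfd, hg'd, hsum]
  rcases h with h | h
  · exact key g hgd h
  · have hcd : (conjPoly g).natDegree = d := by rw [conjPoly_natDegree, hgd]
    rw [key (conjPoly g) hcd h, lyap_conjPoly]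
end

section
/- For every integer d ≥ 2, there exist polynomials f, g ∈ ℚ̄[z] of degree d with 𝓛_f = 𝓛_g = log d such that f and g are not intertwined and f and ḡ are not intertwined. -/
open Polynomial

noncomputable section

lemma monic_add_natDeg {p q : ℂ[X]} (hp : p.Monic) (h : q.degree < p.degree) :
    (p + q).Monic ∧ (p + q).natDegree = p.natDegree :=
  ⟨hp.add_of_left h, natDegree_eq_of_degree_eq (degree_add_eq_left_of_degree_lt h)⟩

lemma dickson_monic_natDegree :
    ∀ n : ℕ, (dickson 1 (1:ℂ) (n+1)).Monic ∧ (dickson 1 (1:ℂ) (n+1)).natDegree = n + 1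
  | 0 => by simp [Polynomial.dickson_one, monic_X]
  | 1 => by
      have h2 : dickson 1 (1:ℂ) 2 = X ^ 2 + (-2) := by
        rw [dickson_two 1 1]; simp; ring
      rw [h2]
      have hlt : ((-2:ℂ[X])).degree < (X ^ 2 : ℂ[X]).degree := by
        rw [degree_X_pow]
        calc ((-2:ℂ[X])).degree ≤ 0 := by
              rw [show ((-2:ℂ[X])) = C (-2) by rw [map_neg, ← map_ofNat C 2]]
              exact degree_C_le
          _ < (2 : WithBot ℕ) := by norm_num
      have := monic_add_natDeg (monic_X_pow 2) hlt
      exact ⟨this.1, by rw [this.2, natDegree_X_pow]⟩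
  | (n+2) => by
      have h1 := dickson_monic_natDegree n
      have h2 := dickson_monic_natDegree (n+1)
      have hrec : dickson 1 (1:ℂ) (n+2+1) = X * dickson 1 (1:ℂ) (n+2) + (-(C 1 * dickson 1 (1:ℂ) (n+1))) := by
        rw [show n+2+1 = n+1+2 from by omega, dickson_add_two 1 1 (n+1)]; ring_nf
      have hm : (X * dickson 1 (1:ℂ) (n+2)).Monic := monic_X.mul h2.1
      have hdeg : (X * dickson 1 (1:ℂ) (n+2)).natDegree = n + 3 := by
        rw [monic_X.natDegree_mul h2.1, natDegree_X]; omega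
      have hlt : (-(C (1:ℂ) * dickson 1 (1:ℂ) (n+1))).degree < (X * dickson 1 (1:ℂ) (n+2)).degree := by
        rw [degree_neg, C_1, one_mul, degree_eq_natDegree h1.1.ne_zero,
          degree_eq_natDegree hm.ne_zero, h1.2, hdeg]
        exact_mod_cast by omega
      have := monic_add_natDeg hm hlt
      rw [hrec]
      exact ⟨this.1, by rw [this.2, hdeg]⟩

lemma dickson_natDegree {d : ℕ} (hd : 1 ≤ d) : (dickson 1 (1:ℂ) d).natDegree = d := by
  obtain ⟨n, rfl⟩ := Nat.exists_eq_add_of_le hd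
  simpa [add_comm] using (dickson_monic_natDegree n).2

lemma dickson_eval (d : ℕ) (z : ℂ) (hz : z ≠ 0) :
    (dickson 1 (1:ℂ) d).eval (z + z⁻¹) = z ^ d + (z⁻¹) ^ d :=
  dickson_one_one_eval_add_inv z z⁻¹ (mul_inv_cancel₀ hz) d


/-- If `p(z+z⁻¹) = z^M + z^{-M}` off `0`, then `p'` vanishes at `z+z⁻¹` for any
`2M`-th root of unity `z` with `z² ≠ 1`. -/
lemma deriv_vanish {p : ℂ[X]} {M : ℕ}
    (hp : ∀ z : ℂ, z ≠ 0 → p.eval (z + z⁻¹) = z ^ M + (z⁻¹) ^ M)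
    {z : ℂ} (hz : z ≠ 0) (h1 : z ^ (2 * M) = 1) (h2 : z ^ 2 ≠ 1) :
    p.derivative.eval (z + z⁻¹) = 0 := by
  have hzM : z ^ M ≠ 0 := pow_ne_zero _ hz
  -- F = p.eval (w + w⁻¹)
  have hF : HasDerivAt (fun w : ℂ => p.eval (w + w⁻¹))
      (p.derivative.eval (z + z⁻¹) * (1 + -(z ^ 2)⁻¹)) z :=
    (Polynomial.hasDerivAt p (z + z⁻¹)).comp (h := fun w : ℂ => w + w⁻¹) z ((hasDerivAt_id z).add (hasDerivAt_inv hz))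
  have hG : HasDerivAt (fun w : ℂ => w ^ M + (w ^ M)⁻¹)
      ((M : ℂ) * z ^ (M - 1) + (-((z ^ M) ^ 2)⁻¹ * ((M : ℂ) * z ^ (M - 1)))) z :=
    (hasDerivAt_pow M z).add ((hasDerivAt_inv hzM).comp z (hasDerivAt_pow M z))
  have heq : (fun w : ℂ => p.eval (w + w⁻¹)) =ᶠ[nhds z] (fun w : ℂ => w ^ M + (w ^ M)⁻¹) := by
    filter_upwards [isOpen_compl_singleton.mem_nhds (by simpa using hz :
      z ∈ ({0}ᶜ : Set ℂ))] with w hw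
    have hw0 : w ≠ 0 := by simpa using hw
    rw [hp w hw0, inv_pow]
  have hF' : HasDerivAt (fun w : ℂ => w ^ M + (w ^ M)⁻¹)
      (p.derivative.eval (z + z⁻¹) * (1 + -(z ^ 2)⁻¹)) z := hF.congr_of_eventuallyEq heq.symm
  have hder := hF'.unique hG
  have hz2M : ((z ^ M) ^ 2)⁻¹ = 1 := by
    rw [← pow_mul, mul_comm M 2, h1]; norm_num
  have hrhs : (M : ℂ) * z ^ (M - 1) + (-((z ^ M) ^ 2)⁻¹ * ((M : ℂ) * z ^ (M - 1))) = 0 := by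
    rw [hz2M]; ring
  rw [hrhs] at hder
  have hfac : (1 + -(z ^ 2)⁻¹) ≠ 0 := by
    intro h
    apply h2
    have : (z ^ 2)⁻¹ = 1 := by linear_combination -h
    field_simp at this
    exact this.symm
  exact (mul_eq_zero.mp hder).resolve_right hfac

lemma exists_root_of_natDegree_pos {p : ℂ[X]} (hp : 0 < p.natDegree) : ∃ x, p.IsRoot x :=
  IsAlgClosed.exists_root p
    (fun h => hp.ne' (natDegree_eq_zero_iff_degree_le_zero.mpr h.le))

lemma rootset_singleton_eq_pow {p : ℂ[X]} {b : ℂ}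
    (h : p.roots.toFinset = {b}) :
    p = C p.leadingCoeff * (X - C b) ^ p.natDegree := by
  have hsplits : Splits p := IsAlgClosed.splits p
  have hcard : p.roots.card = p.natDegree := (splits_iff_card_roots.mp hsplits)
  have hall : ∀ x ∈ p.roots, x = b := by
    intro x hx
    have : x ∈ p.roots.toFinset := Multiset.mem_toFinset.mpr hx
    rw [h, Finset.mem_singleton] at this
    exact this
  have hrep : p.roots = Multiset.replicate p.natDegree b :=
    Multiset.eq_replicate.mpr ⟨hcard, hall⟩
  calc p = C p.leadingCoeff * (p.roots.map fun a => X - C a).prod :=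
        hsplits.eq_prod_roots
    _ = C p.leadingCoeff * (X - C b) ^ p.natDegree := by
        rw [hrep, Multiset.map_replicate, Multiset.prod_replicate]

/-- Classification: if `h₁^m = h₁ ∘ S` with `h₁` nonconstant, then `S` is a conjugated
power map. -/
lemma power_semiconj_classify {S h₁ : ℂ[X]} {m : ℕ} (hm : 2 ≤ m)
    (hS : 0 < S.natDegree) (hh : 0 < h₁.natDegree)
    (E : h₁ ^ m = h₁.comp S) :
    ∃ a l : ℂ, l ≠ 0 ∧ S = C l * (X - C a) ^ m + C a := by
  have hmC : (m : ℂ) ≠ 0 := Nat.cast_ne_zero.mpr (by omega)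
  have hh0 : h₁ ≠ 0 := fun h => by simp [h] at hh
  -- degree of S is m
  have hSm : S.natDegree = m := by
    have h1 := congrArg natDegree E
    rw [natDegree_pow, natDegree_comp] at h1
    have h2 : h₁.natDegree * m = h₁.natDegree * S.natDegree := by
      rw [mul_comm h₁.natDegree m]; exact h1
    exact (Nat.eq_of_mul_eq_mul_left hh h2).symm
  -- pointwise version
  have Ept : ∀ x : ℂ, (h₁.eval x) ^ m = h₁.eval (S.eval x) := by
    intro x
    have := congrArg (eval x) E
    simpa [eval_pow, eval_comp] using this
  -- the root set of h₁
  set T : Finset ℂ := h₁.roots.toFinset with hT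
  have hmemT : ∀ x : ℂ, x ∈ T ↔ h₁.eval x = 0 := by
    intro x; rw [hT, Multiset.mem_toFinset, mem_roots hh0]; rfl
  have hTne : T.Nonempty := by
    obtain ⟨x, hx⟩ := exists_root_of_natDegree_pos hh
    exact ⟨x, (hmemT x).mpr hx⟩
  -- fibers
  have hSCa_ne : ∀ a : ℂ, S - C a ≠ 0 := by
    intro a h
    have h2 : (S - C a).natDegree = S.natDegree := natDegree_sub_C
    rw [h, natDegree_zero] at h2
    omega
  have hSCa_deg : ∀ a : ℂ, (S - C a).natDegree = m := by
    intro a; rw [natDegree_sub_C, hSm]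
  set R : ℂ → Finset ℂ := fun a => (S - C a).roots.toFinset with hR
  have hmemR : ∀ a x : ℂ, x ∈ R a ↔ S.eval x = a := by
    intro a x
    rw [hR]
    simp only [Multiset.mem_toFinset, mem_roots (hSCa_ne a), IsRoot.def, eval_sub, eval_C,
      sub_eq_zero]
  have hRsub : ∀ a ∈ T, R a ⊆ T := by
    intro a ha x hx
    rw [hmemT]
    have hSx : S.eval x = a := (hmemR a x).mp hx
    have h3 := Ept x
    rw [hSx, (hmemT a).mp ha] at h3
    exact pow_eq_zero_iff (by omega : m ≠ 0) |>.mp h3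
  have hRne : ∀ a : ℂ, (R a).Nonempty := by
    intro a
    obtain ⟨x, hx⟩ := exists_root_of_natDegree_pos (p := S - C a) (by rw [hSCa_deg]; omega)
    refine ⟨x, (hmemR a x).mpr ?_⟩
    have h4 : S.eval x - a = 0 := by simpa using hx
    exact sub_eq_zero.mp h4
  have hdisj : ∀ a ∈ T, ∀ a' ∈ T, a ≠ a' → Disjoint (R a) (R a') := by
    intro a _ a' _ hne
    rw [Finset.disjoint_left]
    intro x hx hx'
    exact hne (((hmemR a x).mp hx).symm.trans ((hmemR a' x).mp hx'))
  have hcardsum : (∑ a ∈ T, (R a).card) ≤ T.card := by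
    rw [← Finset.card_biUnion hdisj]
    apply Finset.card_le_card
    intro x hx
    obtain ⟨a, ha, hxa⟩ := Finset.mem_biUnion.mp hx
    exact hRsub a ha hxa
  have hcard1 : ∀ a ∈ T, (R a).card = 1 := by
    intro a ha
    by_contra hne
    have h2 : 2 ≤ (R a).card := by
      have := Finset.card_pos.mpr (hRne a)
      omega
    have hlt : T.card < ∑ a ∈ T, (R a).card := by
      calc T.card = ∑ a ∈ T, 1 := by simp
        _ < ∑ a ∈ T, (R a).card := by
            apply Finset.sum_lt_sum
            · intro i _; exact Finset.card_pos.mpr (hRne i)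
            · exact ⟨a, ha, by omega⟩
    omega
  -- for each a in T, S - C a is a pure power
  have hpow : ∀ a ∈ T, ∃ b ∈ T, S - C a = C (S - C a).leadingCoeff * (X - C b) ^ m := by
    intro a ha
    obtain ⟨b, hb⟩ := Finset.card_eq_one.mp (hcard1 a ha)
    refine ⟨b, hRsub a ha (by rw [hb]; exact Finset.mem_singleton_self b), ?_⟩
    have := rootset_singleton_eq_pow (p := S - C a) (b := b) hb
    rwa [hSCa_deg a] at this
  -- any two elements of T coincide
  have hlead : ∀ a : ℂ, (S - C a).leadingCoeff = S.leadingCoeff := by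
    intro a
    rw [leadingCoeff, leadingCoeff, natDegree_sub_C, coeff_sub, coeff_C,
      if_neg (by rw [hSm]; omega : S.natDegree ≠ 0), sub_zero]
  have hTuniq : ∀ a ∈ T, ∀ a' ∈ T, a = a' := by
    intro a ha a' ha'
    obtain ⟨b, hbT, hb⟩ := hpow a ha
    obtain ⟨b', hbT', hb'⟩ := hpow a' ha'
    set l := S.leadingCoeff with hl
    have hl0 : l ≠ 0 := leadingCoeff_ne_zero.mpr (fun h => by simp [h] at hS)
    rw [hlead a] at hb
    rw [hlead a'] at hb'
    -- derivatives agree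
    have hder : derivative (C l * (X - C b) ^ m) = derivative (C l * (X - C b') ^ m) := by
      have e1 : derivative (S - C a) = derivative S := by
        rw [derivative_sub, derivative_C, sub_zero]
      have e2 : derivative (S - C a') = derivative S := by
        rw [derivative_sub, derivative_C, sub_zero]
      rw [← hb, ← hb', e1, e2]
    simp only [derivative_C_mul, derivative_pow, derivative_X_sub_C, mul_one] at hder
    have hcancel : (X - C b : ℂ[X]) ^ (m - 1) = (X - C b') ^ (m - 1) := by
      have hCl : (C l * C (m:ℂ) : ℂ[X]) ≠ 0 := by
        simp only [← C_mul, Ne, C_eq_zero]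
        exact mul_ne_zero hl0 hmC
      apply mul_left_cancel₀ hCl
      calc C l * C (m:ℂ) * (X - C b : ℂ[X]) ^ (m-1)
          = C l * (C (m:ℂ) * (X - C b) ^ (m-1)) := by ring
        _ = C l * (C (m:ℂ) * (X - C b') ^ (m-1)) := hder
        _ = C l * C (m:ℂ) * (X - C b' : ℂ[X]) ^ (m-1) := by ring
    have hbb : b = b' := by
      have := congrArg (eval b) hcancel
      simp only [eval_pow, eval_sub, eval_X, eval_C, sub_self] at this
      have h0 : ((b : ℂ) - b') ^ (m-1) = 0 := by
        rw [← this, zero_pow (by omega : m - 1 ≠ 0)]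
      exact sub_eq_zero.mp (pow_eq_zero_iff (by omega : m - 1 ≠ 0) |>.mp h0)
    -- now S - C a = S - C a'
    rw [hbb] at hb
    have h5 : S - (S - C a) = S - (S - C a') := by
      rw [hb, hb']
    have h6 : (C a : ℂ[X]) = C a' := by
      have h7 : S - (S - C a) = C a := by ring
      have h8 : S - (S - C a') = C a' := by ring
      rw [h7, h8] at h5
      exact h5
    exact C_inj.mp h6
  -- conclude
  obtain ⟨a, ha⟩ := hTne
  obtain ⟨b, hbT, hb⟩ := hpow a ha
  have hba : b = a := (hTuniq b hbT a ha)
  refine ⟨a, S.leadingCoeff, leadingCoeff_ne_zero.mpr (fun h => by simp [h] at hS), ?_⟩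
  rw [hlead a, hba] at hb
  rw [← hb]
  ring

lemma iterComp_X_pow (d n : ℕ) : iterComp (X ^ d : ℂ[X]) n = X ^ (d ^ n) := by
  induction n with
  | zero => simp [iterComp]
  | succ n ih =>
      rw [iterComp, ih, pow_comp, X_comp, ← pow_mul, pow_succ]

lemma iterComp_natDegree_s10 (g : ℂ[X]) (n : ℕ) :
    (iterComp g n).natDegree = g.natDegree ^ n := by
  induction n with
  | zero => simp [iterComp]
  | succ n ih => rw [iterComp, natDegree_comp, ih, pow_succ]; ring

lemma iterComp_eval_identity {g : ℂ[X]} {d : ℕ}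
    (hg : ∀ z : ℂ, z ≠ 0 → g.eval (z + z⁻¹) = z ^ d + (z⁻¹) ^ d) (n : ℕ) :
    ∀ z : ℂ, z ≠ 0 → (iterComp g n).eval (z + z⁻¹) = z ^ (d ^ n) + (z⁻¹) ^ (d ^ n) := by
  induction n with
  | zero => intro z hz; simp [iterComp]
  | succ n ih =>
      intro z hz
      have hzn : z ^ (d ^ n) ≠ 0 := pow_ne_zero _ hz
      have key : (iterComp g (n+1)).eval (z + z⁻¹)
          = (z ^ (d ^ n)) ^ d + ((z ^ (d ^ n))⁻¹) ^ d := by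
        rw [iterComp, eval_comp, ih z hz,
          show ((z⁻¹) ^ (d^n) : ℂ) = (z ^ (d^n))⁻¹ from inv_pow z _,
          hg (z ^ (d ^ n)) hzn]
      rw [key, ← pow_mul, ← pow_succ, ← inv_pow, ← pow_mul, ← pow_succ]

theorem not_intertwined (d : ℕ) (hd : 2 ≤ d) :
    ¬ Intertwined (X ^ d : ℂ[X]) (dickson 1 (1:ℂ) d) := by
  rintro ⟨n, S, h₁, h₂, hn, hS, hh₁, hh₂, e₁, e₂⟩
  set m := d ^ n with hmdef
  have hm : 2 ≤ m := by
    calc 2 ≤ d := hd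
      _ = d ^ 1 := (pow_one d).symm
      _ ≤ d ^ n := Nat.pow_le_pow_right (by omega) hn
  have hmC : (m : ℂ) ≠ 0 := Nat.cast_ne_zero.mpr (by omega)
  -- power map side
  have e₁' : h₁ ^ m = h₁.comp S := by
    rw [iterComp_X_pow, ← hmdef, pow_comp, X_comp] at e₁
    exact e₁
  obtain ⟨a, l, hl, hSeq⟩ := power_semiconj_classify hm hS hh₁ e₁'
  have hGdeg' : (iterComp (dickson 1 (1:ℂ) d) n).natDegree = m := by
    rw [iterComp_natDegree_s10, dickson_natDegree (by omega), hmdef]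
  have hGid' : ∀ z : ℂ, z ≠ 0 → (iterComp (dickson 1 (1:ℂ) d) n).eval (z + z⁻¹) = z ^ m + (z⁻¹) ^ m := by
    rw [hmdef]
    exact iterComp_eval_identity (fun z hz => dickson_eval d z hz) n
  clear_value m
  clear hmdef
  have Spt : ∀ y : ℂ, S.eval y = l * (y - a) ^ m + a := by
    intro y; rw [hSeq]; simp [eval_mul, eval_pow, eval_add, eval_sub]
  -- normalize
  obtain ⟨β, hβ⟩ := IsAlgClosed.exists_pow_nat_eq (k := ℂ) l⁻¹ (n := m - 1) (by omega)
  have hβ0 : β ≠ 0 := by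
    intro h
    rw [h, zero_pow (by omega : m - 1 ≠ 0)] at hβ
    exact inv_ne_zero hl hβ.symm
  have hlβ : l * β ^ m = β := by
    have h5 : β ^ m = β ^ (m - 1) * β := by
      rw [← pow_succ]; congr 1; omega
    rw [h5, hβ, ← mul_assoc, mul_inv_cancel₀ hl, one_mul]
  -- Chebyshev side
  set G := iterComp (dickson 1 (1:ℂ) d) n with hGdef
  have hGid : ∀ z : ℂ, z ≠ 0 → G.eval (z + z⁻¹) = z ^ m + (z⁻¹) ^ m := hGid'
  have hGdeg : G.natDegree = m := hGdeg'
  set q : ℂ[X] := h₂.comp (C β * X + C a) with hqdef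
  have hqdeg : 0 < q.natDegree := by
    rw [hqdef, natDegree_comp, natDegree_add_C, natDegree_C_mul hβ0, natDegree_X, mul_one]
    exact hh₂
  have hqpt : ∀ x : ℂ, G.eval (q.eval x) = q.eval (x ^ m) := by
    intro x
    have h1 : q.eval x = h₂.eval (β * x + a) := by rw [hqdef, eval_comp]; simp
    have h2 : q.eval (x ^ m) = h₂.eval (β * x ^ m + a) := by rw [hqdef, eval_comp]; simp
    have h3 : ∀ y : ℂ, G.eval (h₂.eval y) = h₂.eval (S.eval y) := by
      intro y
      have := congrArg (eval y) e₂
      simpa [eval_comp] using this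
    rw [h1, h3 (β * x + a), h2]
    congr 1
    rw [Spt (β * x + a), add_sub_cancel_right]
    have h6 : l * (β * x) ^ m + a = l * β ^ m * x ^ m + a := by ring
    rw [h6, hlβ]
  have hqpoly : G.comp q = q.comp (X ^ m) := by
    apply Polynomial.funext
    intro x
    have h15 := hqpt x
    simp only [eval_comp, eval_pow, eval_X] at h15 ⊢
    exact h15
  -- multiplicities at 0 resp. c₀
  set c₀ := q.eval 0 with hc₀
  set p₁ : ℂ[X] := q - C c₀ with hp₁def
  have hp₁ : p₁ ≠ 0 := by
    intro h
    have h7 : q = C c₀ := by rwa [← sub_eq_zero]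
    rw [h7, natDegree_C] at hqdeg
    omega
  set j := rootMultiplicity 0 p₁ with hjdef
  have hj : 0 < j := (rootMultiplicity_pos hp₁).mpr (by simp [hp₁def, IsRoot, hc₀])
  set p₂ : ℂ[X] := G - C c₀ with hp₂def
  have hp₂deg : p₂.natDegree = m := by rw [hp₂def, natDegree_sub_C, hGdeg]
  have hp₂ : p₂ ≠ 0 := by
    intro h
    rw [h, natDegree_zero] at hp₂deg
    omega
  set e := rootMultiplicity c₀ p₂ with hedef
  obtain ⟨u, hu, hu'⟩ := p₁.exists_eq_pow_rootMultiplicity_mul_and_not_dvd hp₁ 0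
  obtain ⟨v, hv, hv'⟩ := p₂.exists_eq_pow_rootMultiplicity_mul_and_not_dvd hp₂ c₀
  rw [← hjdef] at hu
  rw [← hedef] at hv
  rw [C_0, sub_zero] at hu
  have hu0 : u.eval 0 ≠ 0 := fun h => hu' (by rw [C_0, sub_zero]; exact X_dvd_iff.mpr (by
    rwa [← coeff_zero_eq_eval_zero] at h))
  have hvc : v.eval c₀ ≠ 0 := fun h => hv' (dvd_iff_isRoot.mpr h)
  -- the big identity
  have hbig : p₂.comp q = p₁.comp (X ^ m) := by
    rw [hp₂def, hp₁def, sub_comp, sub_comp, C_comp, C_comp, hqpoly]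
  have hL : p₂.comp q = (X : ℂ[X]) ^ (j * e) * (u ^ e * v.comp q) := by
    rw [hv, mul_comp, pow_comp, sub_comp, C_comp, X_comp,
      show (q - C c₀ : ℂ[X]) = X ^ j * u from hu, mul_pow, ← pow_mul]
    ring
  have hR : p₁.comp (X ^ m) = (X : ℂ[X]) ^ (j * m) * u.comp (X ^ m) := by
    rw [hu, mul_comp, pow_comp, X_comp, ← pow_mul, mul_comm m j]
  have hA_ne : (u ^ e * v.comp q).eval 0 ≠ 0 := by
    simp only [eval_mul, eval_pow, eval_comp, ← hc₀]
    exact mul_ne_zero (pow_ne_zero _ hu0) hvc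
  have hB_ne : (u.comp (X ^ m)).eval 0 ≠ 0 := by
    rw [eval_comp, eval_pow, eval_X, zero_pow (by omega : m ≠ 0)]
    exact hu0
  have hXj : ∀ (k : ℕ), rootMultiplicity 0 ((X : ℂ[X]) ^ k) = k := by
    intro k
    rw [show ((X : ℂ[X]) ^ k) = (X - C 0) ^ k by rw [C_0, sub_zero]]
    exact rootMultiplicity_X_sub_C_pow 0 k
  have hrm1 : rootMultiplicity 0 (p₂.comp q) = j * e := by
    rw [hL, rootMultiplicity_mul (mul_ne_zero (pow_ne_zero _ X_ne_zero)
      (fun h => hA_ne (by rw [h]; simp))), hXj,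
      rootMultiplicity_eq_zero (fun h => hA_ne h), add_zero]
  have hrm2 : rootMultiplicity 0 (p₁.comp (X ^ m)) = j * m := by
    rw [hR, rootMultiplicity_mul (mul_ne_zero (pow_ne_zero _ X_ne_zero)
      (fun h => hB_ne (by rw [h]; simp))), hXj,
      rootMultiplicity_eq_zero (fun h => hB_ne h), add_zero]
  have hem : e = m := by
    have := hrm1.symm.trans (by rw [hbig, hrm2])
    exact Nat.eq_of_mul_eq_mul_left hj this
  -- v is a nonzero constant
  have hvdeg : v.natDegree = 0 := by
    have h8 : p₂.natDegree = e * 1 + v.natDegree := by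
      rw [hv, natDegree_mul (pow_ne_zero _ (X_sub_C_ne_zero c₀))
        (fun h => hvc (by rw [h]; simp)), natDegree_pow, natDegree_X_sub_C]
    rw [hp₂deg, hem] at h8
    omega
  set v₀ := v.coeff 0 with hv₀def
  have hvC : v = C v₀ := eq_C_of_natDegree_eq_zero hvdeg
  have hv₀ : v₀ ≠ 0 := fun h => hvc (by rw [hvC, h]; simp)
  have hGpt : ∀ w : ℂ, G.eval w = v₀ * (w - c₀) ^ m + c₀ := by
    intro w
    have h9 : p₂.eval w = (w - c₀) ^ e * v₀ := by
      rw [hv, hvC]; simp [eval_mul, eval_pow]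
    have h10 : G.eval w = p₂.eval w + c₀ := by rw [hp₂def]; simp
    rw [h10, h9, hem]; ring
  -- derivative of G
  have hGpoly : G = C v₀ * (X - C c₀) ^ m + C c₀ := by
    apply Polynomial.funext
    intro w
    rw [hGpt w]; simp [eval_mul, eval_pow]
  have hGder : ∀ w : ℂ, G.derivative.eval w = v₀ * (m : ℂ) * (w - c₀) ^ (m - 1) := by
    intro w
    rw [hGpoly]
    rw [derivative_add, derivative_C, add_zero, derivative_C_mul, derivative_pow,
      derivative_X_sub_C, mul_one]
    simp [eval_mul, eval_pow]
    ring
  -- the special point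
  obtain ⟨ζ, hζ⟩ : ∃ ζ : ℂ, IsPrimitiveRoot ζ (2 * m) :=
    ⟨_, Complex.isPrimitiveRoot_exp (2 * m) (by omega)⟩
  have hζ0 : ζ ≠ 0 := hζ.ne_zero (by omega)
  have hζ2m : ζ ^ (2 * m) = 1 := hζ.pow_eq_one
  have hζ2 : ζ ^ 2 ≠ 1 := by
    intro h
    have hdvd := (hζ.pow_eq_one_iff_dvd 2).mp h
    have := Nat.le_of_dvd (by omega) hdvd
    omega
  have hcrit : G.derivative.eval (ζ + ζ⁻¹) = 0 := deriv_vanish hGid hζ0 hζ2m hζ2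
  have hw₁ : ζ + ζ⁻¹ = c₀ := by
    rw [hGder] at hcrit
    have h11 : ((ζ + ζ⁻¹) - c₀) ^ (m - 1) = 0 := by
      rcases mul_eq_zero.mp hcrit with h | h
      · exact absurd h (mul_ne_zero hv₀ hmC)
      · exact h
    exact sub_eq_zero.mp (pow_eq_zero_iff (by omega : m - 1 ≠ 0) |>.mp h11)
  -- value of G at the special point, two ways
  have hζm : ζ ^ m = -1 := by
    have hsq : (ζ ^ m) ^ 2 = 1 := by rw [← pow_mul, mul_comm m 2, hζ2m]
    have hne1 : ζ ^ m ≠ 1 := by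
      intro h
      have hdvd := (hζ.pow_eq_one_iff_dvd m).mp h
      have := Nat.le_of_dvd (by omega) hdvd
      omega
    have h16 : (ζ ^ m - 1) * (ζ ^ m + 1) = 0 := by linear_combination hsq
    rcases mul_eq_zero.mp h16 with h | h
    · exact absurd (sub_eq_zero.mp h) hne1
    · linear_combination h
  have hval : G.eval (ζ + ζ⁻¹) = -2 := by
    rw [hGid ζ hζ0, inv_pow, hζm]
    norm_num
  have hval2 : G.eval (ζ + ζ⁻¹) = ζ + ζ⁻¹ := by
    rw [hGpt, hw₁]
    simp [zero_pow (by omega : m ≠ 0)]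
  have hm2 : ζ + ζ⁻¹ = -2 := by rw [← hval2, hval]
  -- contradiction: ζ = -1, but ζ² ≠ 1
  have hζne : ζ = -1 := by
    have h12 : ζ * (ζ + ζ⁻¹) = ζ * (-2) := by rw [hm2]
    have h13 : ζ ^ 2 + 1 = -2 * ζ := by
      field_simp at h12
      linear_combination h12
    have h14 : (ζ + 1) ^ 2 = 0 := by linear_combination h13
    have h17 := pow_eq_zero_iff (two_ne_zero) |>.mp h14
    linear_combination h17
  apply hζ2
  rw [hζne]
  norm_num
noncomputable section

lemma greenFn_eq_zero {p : ℂ[X]} (hdeg : 2 ≤ p.natDegree) {z : ℂ}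
    (hb : ∀ n : ℕ, ‖(fun w => p.eval w)^[n] z‖ ≤ 2) :
    greenFn p z = 0 := by
  apply Filter.Tendsto.limUnder_eq
  have hd1 : (1 : ℝ) < (p.natDegree : ℝ) := by exact_mod_cast by omega
  have hpos : ∀ n : ℕ, (0:ℝ) < ((p.natDegree : ℝ) ^ n) := fun n => pow_pos (by linarith) n
  apply squeeze_zero (g := fun n : ℕ => ((p.natDegree : ℝ) ^ n)⁻¹ * Real.log 2)
  · intro n
    apply mul_nonneg (le_of_lt (inv_pos.mpr (hpos n)))
    exact Real.log_nonneg (le_max_left _ _)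
  · intro n
    apply mul_le_mul_of_nonneg_left _ (le_of_lt (inv_pos.mpr (hpos n)))
    apply Real.log_le_log (by positivity)
    exact max_le (by norm_num) (hb n)
  · have h1 : (fun n : ℕ => ((p.natDegree : ℝ) ^ n)⁻¹ * Real.log 2)
        = (fun n : ℕ => ((p.natDegree : ℝ)⁻¹) ^ n * Real.log 2) := by
      funext n; rw [inv_pow]
    rw [h1]
    have h2 := tendsto_pow_atTop_nhds_zero_of_lt_one
      (le_of_lt (inv_pos.mpr (by linarith : (0:ℝ) < p.natDegree)))
      (inv_lt_one_of_one_lt₀ hd1)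
    simpa using h2.mul_const (Real.log 2)
end
-- Section H: lyapunov side
def PredK (c : ℂ) : Prop := ∃ z : ℂ, ‖z‖ = 1 ∧ c = z + z⁻¹

lemma predK_abs_le {c : ℂ} (h : PredK c) : ‖c‖ ≤ 2 := by
  obtain ⟨z, hz, rfl⟩ := h
  calc ‖z + z⁻¹‖ ≤ ‖z‖ + ‖z⁻¹‖ := norm_add_le _ _
    _ = 2 := by rw [norm_inv, hz]; norm_num

lemma predK_step {d : ℕ} {c : ℂ} (h : PredK c) : PredK ((dickson 1 (1:ℂ) d).eval c) := by
  obtain ⟨z, hz, rfl⟩ := h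
  have hz0 : z ≠ 0 := by
    intro h0
    rw [h0] at hz
    simp at hz
  refine ⟨z ^ d, by rw [norm_pow, hz, one_pow], ?_⟩
  rw [dickson_eval d z hz0, inv_pow]

lemma predK_orbit {d : ℕ} {c : ℂ} (h : PredK c) (n : ℕ) :
    PredK ((fun w => (dickson 1 (1:ℂ) d).eval w)^[n] c) := by
  induction n with
  | zero => simpa using h
  | succ n ih =>
      rw [Function.iterate_succ_apply']
      exact predK_step ih

lemma abs_eq_one_of_pow_eq_one {z : ℂ} {n : ℕ} (hn : n ≠ 0) (h : z ^ n = 1) :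
    ‖z‖ = 1 := by
  have h1 : ‖z‖ ^ n = 1 := by
    rw [← norm_pow, h, norm_one]
  by_contra hne
  rcases lt_or_gt_of_ne hne with hlt | hgt
  · have := pow_lt_one₀ (norm_nonneg z) hlt hn
    rw [h1] at this
    exact lt_irrefl _ this
  · have := one_lt_pow₀ hgt hn
    rw [h1] at this
    exact lt_irrefl _ this

/-- every root of the derivative of the normalized Chebyshev polynomial is of the form
`z + z⁻¹` with `|z| = 1`. -/
lemma dickson_deriv_roots {d : ℕ} (hd : 2 ≤ d) {c : ℂ}
    (hc : c ∈ (dickson 1 (1:ℂ) d).derivative.roots) : PredK c := by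
  set p := (dickson 1 (1:ℂ) d).derivative with hpdef
  -- degree and nonvanishing of p
  have hmon := (dickson_monic_natDegree (d-1))
  have hdd : d - 1 + 1 = d := by omega
  rw [hdd] at hmon
  have hcoeff : p.coeff (d-1) ≠ 0 := by
    rw [hpdef, coeff_derivative]
    have h1 : (dickson 1 (1:ℂ) d).coeff (d - 1 + 1) = 1 := by
      rw [hdd]
      have := hmon.1
      rw [Monic, leadingCoeff, hmon.2] at this
      exact this
    rw [h1, one_mul]
    have := Nat.cast_add_one_ne_zero (R := ℂ) (d-1)
    exact_mod_cast this
  have hpne : p ≠ 0 := fun h => hcoeff (by rw [h]; simp)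
  have hplt : p.natDegree < d := by
    have := natDegree_derivative_lt (p := dickson 1 (1:ℂ) d) (by rw [hmon.2]; omega)
    rwa [hmon.2] at this
  have hpge : d - 1 ≤ p.natDegree := le_natDegree_of_ne_zero hcoeff
  have hpdeg : p.natDegree = d - 1 := by omega
  -- primitive 2d-th root of unity
  obtain ⟨ζ, hζ⟩ : ∃ ζ : ℂ, IsPrimitiveRoot ζ (2 * d) :=
    ⟨_, Complex.isPrimitiveRoot_exp (2 * d) (by omega)⟩
  have hζ0 : ζ ≠ 0 := hζ.ne_zero (by omega)
  have habs : ∀ k : ℕ, ‖ζ ^ k‖ = 1 := by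
    intro k
    apply abs_eq_one_of_pow_eq_one (n := 2*d) (by omega)
    rw [← pow_mul, mul_comm k (2*d), pow_mul, hζ.pow_eq_one, one_pow]
  -- the critical points
  set W : Finset ℂ := (Finset.Icc 1 (d-1)).image (fun k => ζ ^ k + (ζ ^ k)⁻¹) with hWdef
  have hinj : Set.InjOn (fun k => ζ ^ k + (ζ ^ k)⁻¹) (Finset.Icc 1 (d-1)) := by
    intro k hk k' hk' he
    simp only [Finset.coe_Icc, Set.mem_Icc, Finset.mem_Icc] at hk hk'
    have hk0 : (ζ:ℂ) ^ k ≠ 0 := pow_ne_zero _ hζ0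
    have hk0' : (ζ:ℂ) ^ k' ≠ 0 := pow_ne_zero _ hζ0
    -- from z + z⁻¹ = w + w⁻¹: (z - w)(zw - 1) = 0
    have hfac : ((ζ:ℂ) ^ k - ζ ^ k') * (ζ ^ k * ζ ^ k' - 1) = 0 := by
      have he' : (ζ:ℂ) ^ k + (ζ ^ k)⁻¹ = ζ ^ k' + (ζ ^ k')⁻¹ := he
      field_simp at he'
      linear_combination he'
    rcases mul_eq_zero.mp hfac with h | h
    · have hkk : (ζ:ℂ) ^ k = ζ ^ k' := sub_eq_zero.mp h
      exact hζ.pow_inj (by omega) (by omega) hkk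
    · exfalso
      have hkk : (ζ:ℂ) ^ (k + k') = 1 := by
        rw [pow_add]
        linear_combination h
      have := (hζ.pow_eq_one_iff_dvd (k + k')).mp hkk
      have hle := Nat.le_of_dvd (by omega) this
      omega
  have hWcard : W.card = d - 1 := by
    rw [hWdef, Finset.card_image_of_injOn hinj, Nat.card_Icc]
    omega
  have hWroots : W ⊆ p.roots.toFinset := by
    intro w hw
    rw [hWdef, Finset.mem_image] at hw
    obtain ⟨k, hk, rfl⟩ := hw
    rw [Finset.mem_Icc] at hk
    rw [Multiset.mem_toFinset, mem_roots hpne]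
    have hzk : (ζ:ℂ) ^ k ≠ 0 := pow_ne_zero _ hζ0
    have h2d : ((ζ:ℂ) ^ k) ^ (2 * d) = 1 := by
      rw [← pow_mul, mul_comm k (2*d), pow_mul, hζ.pow_eq_one, one_pow]
    have h2 : ((ζ:ℂ) ^ k) ^ 2 ≠ 1 := by
      intro h
      rw [← pow_mul] at h
      have := (hζ.pow_eq_one_iff_dvd (k * 2)).mp h
      have hle := Nat.le_of_dvd (by omega) this
      omega
    exact deriv_vanish (fun z hz => dickson_eval d z hz) hzk h2d h2
  have hTcard : p.roots.toFinset.card ≤ d - 1 := by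
    calc p.roots.toFinset.card ≤ Multiset.card p.roots := Multiset.toFinset_card_le _
      _ ≤ p.natDegree := p.card_roots'
      _ = d - 1 := hpdeg
  have hWT : W = p.roots.toFinset :=
    Finset.eq_of_subset_of_card_le hWroots (by omega)
  have hcW : c ∈ W := by
    rw [hWT, Multiset.mem_toFinset]
    exact hc
  rw [hWdef, Finset.mem_image] at hcW
  obtain ⟨k, _, rfl⟩ := hcW
  exact ⟨ζ ^ k, habs k, rfl⟩

lemma greenFn_unfold (f : Polynomial ℂ) (z : ℂ) : greenFn f z =
    Filter.limUnder Filter.atTop (fun n : ℕ =>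
      ((f.natDegree : ℝ) ^ n)⁻¹ * Real.log (max 1 (‖(fun w => f.eval w)^[n] z‖))) :=
  rfl

lemma lyap_eq_log {p : ℂ[X]} {d : ℕ} (hdeg : p.natDegree = d)
    (h : ∀ c ∈ p.derivative.roots, greenFn p c = 0) : lyap p = Real.log d := by
  rw [lyap, hdeg]
  have hsum : (p.derivative.roots.map (greenFn p)).sum = 0 := by
    apply Multiset.sum_eq_zero
    intro x hx
    obtain ⟨c, hc, rfl⟩ := Multiset.mem_map.mp hx
    exact h c hc
  rw [hsum, add_zero]

lemma lyap_pow {d : ℕ} (hd : 2 ≤ d) : lyap (X ^ d : ℂ[X]) = Real.log d := by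
  apply lyap_eq_log (natDegree_X_pow d)
  intro c hc
  have hroot := isRoot_of_mem_roots hc
  rw [IsRoot, derivative_X_pow, eval_mul, eval_C, eval_pow, eval_X] at hroot
  have hc0 : c = 0 := by
    rcases mul_eq_zero.mp hroot with h | h
    · exact absurd h (Nat.cast_ne_zero.mpr (by omega))
    · exact pow_eq_zero_iff (by omega : d - 1 ≠ 0) |>.mp h
  subst hc0
  apply greenFn_eq_zero (by rw [natDegree_X_pow]; exact hd)
  intro n
  have hfix : (X ^ d : ℂ[X]).eval 0 = 0 := by
    rw [eval_pow, eval_X, zero_pow (by omega : d ≠ 0)]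
  rw [Function.iterate_fixed hfix n]
  simp

lemma lyap_dickson {d : ℕ} (hd : 2 ≤ d) : lyap (dickson 1 (1:ℂ) d) = Real.log d := by
  apply lyap_eq_log (dickson_natDegree (by omega))
  intro c hc
  have hP := dickson_deriv_roots hd hc
  apply greenFn_eq_zero (by rw [dickson_natDegree (by omega)]; exact hd)
  intro n
  exact predK_abs_le (predK_orbit hP n)

lemma conjPoly_dickson (d : ℕ) : conjPoly (dickson 1 (1:ℂ) d) = dickson 1 (1:ℂ) d := by
  rw [conjPoly, map_dickson, map_one]

lemma alg_coeff_map (p : Polynomial ℚ) (n : ℕ) :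
    IsAlgebraic ℚ ((p.map (algebraMap ℚ ℂ)).coeff n) := by
  rw [coeff_map]
  exact isAlgebraic_algebraMap _

lemma alg_coeff_X_pow (d n : ℕ) : IsAlgebraic ℚ ((X ^ d : ℂ[X]).coeff n) := by
  have h : (X ^ d : ℂ[X]) = (X ^ d : Polynomial ℚ).map (algebraMap ℚ ℂ) := by
    rw [Polynomial.map_pow, map_X]
  rw [h]
  exact alg_coeff_map _ n

lemma alg_coeff_dickson (d n : ℕ) : IsAlgebraic ℚ ((dickson 1 (1:ℂ) d).coeff n) := by
  have h : dickson 1 (1:ℂ) d = (dickson 1 (1:ℚ) d).map (algebraMap ℚ ℂ) := by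
    rw [map_dickson, map_one]
  rw [h]
  exact alg_coeff_map _ n

end

/-- For every `d ≥ 2` there exist `f, g ∈ ℚ̄[z]` of degree `d` with
`𝓛_f = 𝓛_g = log d` such that `f` and `g` are not intertwined and `f` and `ḡ` are not
intertwined. -/
theorem exists_connected_not_intertwined (d : ℕ) (hd : 2 ≤ d) :
    ∃ f g : Polynomial ℂ, f.natDegree = d ∧ g.natDegree = d ∧
      (∀ n, IsAlgebraic ℚ (f.coeff n)) ∧ (∀ n, IsAlgebraic ℚ (g.coeff n)) ∧
      lyap f = Real.log (d : ℝ) ∧ lyap g = Real.log (d : ℝ) ∧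
      ¬ Intertwined f g ∧ ¬ Intertwined f (conjPoly g) := by
  refine ⟨X ^ d, dickson 1 (1:ℂ) d, natDegree_X_pow d, dickson_natDegree (by omega),
    alg_coeff_X_pow d, alg_coeff_dickson d, lyap_pow hd, lyap_dickson hd,
    not_intertwined d hd, ?_⟩
  rw [conjPoly_dickson]
  exact not_intertwined d hd
end
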